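/- Let 0 ≤ α < n, δ > 0, 0 < ε < 1 and let s be a nonnegative integer. Let J ⊆ I ⊆ A be cubes in ℝⁿ with ℓ(J) = 2^{−s} ℓ(I) and dist(c_J, ℝⁿ∖I) ≥ (1/2) ℓ(I)^{1−ε} ℓ(J)^ε. Then for every positive locally finite Borel measure σ on ℝⁿ: P^α_{1+δ}(J, 1_{A∖I} σ) ≤ C · 2^{−sδ(1−ε)} · P^α(J, 1_{A∖I} σ), with C depending only on n, α and δ. -/

import Mathlib

open MeasureTheory
open scoped ENNReal NNReal

noncomputable section

/-- An axis-parallel half-open cube in `ℝⁿ`, given by its corner `a` and side length `l`. -/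
structure QCube (n : ℕ) where
  a : Fin n → ℝ
  l : ℝ

/-- The half-open cube as a subset of `ℝⁿ`. -/
def QCube.pts {n : ℕ} (Q : QCube n) : Set (EuclideanSpace ℝ (Fin n)) :=
  {x | ∀ i, Q.a i ≤ x i ∧ x i < Q.a i + Q.l}

/-- The center of a cube. -/
def QCube.center {n : ℕ} (Q : QCube n) : EuclideanSpace ℝ (Fin n) :=
  (EuclideanSpace.equiv (Fin n) ℝ).symm fun i => Q.a i + Q.l / 2

/-- The concentric dilate `γQ` of a cube `Q`. -/
def QCube.dilate {n : ℕ} (Q : QCube n) (γ : ℝ) : QCube n :=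
  ⟨fun i => Q.a i + Q.l / 2 - γ * Q.l / 2, γ * Q.l⟩

/-- The `m`-weighted `α`-fractional Poisson integral
`P^α_m(Q,μ) = ∫ ℓ(Q)^m / (ℓ(Q)+|y−c_Q|)^{n+m−α} dμ(y)`; `P^α = P^α_1`. -/
def poissonM {n : ℕ} (α m : ℝ) (Q : QCube n)
    (μ : Measure (EuclideanSpace ℝ (Fin n))) : ℝ≥0∞ :=
  ∫⁻ y, ENNReal.ofReal (Q.l ^ m / (Q.l + dist y Q.center) ^ ((n : ℝ) + m - α)) ∂μ

lemma QCube.measurableSet_pts {n : ℕ} (Q : QCube n) : MeasurableSet Q.pts := by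
  have : Q.pts = ⋂ i, ({x : EuclideanSpace ℝ (Fin n) | Q.a i ≤ x i}
      ∩ {x | x i < Q.a i + Q.l}) := by
    ext x; simp [QCube.pts, Set.mem_iInter, forall_and]
  rw [this]
  refine MeasurableSet.iInter fun i => ?_
  have hm : Measurable fun x : EuclideanSpace ℝ (Fin n) => x i := (measurable_pi_apply i).comp (PiLp.continuous_ofLp 2 _).measurable
  exact (measurableSet_le measurable_const hm).inter (measurableSet_lt hm measurable_const)

/-- Decay of the `(1+δ)`-weighted Poisson integral under goodness: if
`0 < ε < 1`, `s ≥ 0`, and `J ⊆ I ⊆ A` are cubes with `ℓ(J) = 2^{−s} ℓ(I)` and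
`dist(c_J, ℝⁿ∖I) ≥ ½ ℓ(I)^{1−ε} ℓ(J)^ε`, then
`P^α_{1+δ}(J, 1_{A∖I}σ) ≤ C 2^{−sδ(1−ε)} P^α(J, 1_{A∖I}σ)` with `C` depending only on
`n`, `α` and `δ`. -/
theorem statement11 (n : ℕ) (α δ : ℝ) (hn : 1 ≤ n) (hα0 : 0 ≤ α) (hαn : α < n)
    (hδ0 : 0 < δ) :
    ∃ C : ℝ, 0 < C ∧
      ∀ ε : ℝ, 0 < ε → ε < 1 →
      ∀ (s : ℕ) (J I A : QCube n), 0 < J.l → 0 < I.l → 0 < A.l →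
        J.pts ⊆ I.pts → I.pts ⊆ A.pts → J.l = 2 ^ (-(s : ℝ)) * I.l →
        (∀ y ∉ I.pts, 1 / 2 * I.l ^ (1 - ε) * J.l ^ ε ≤ dist J.center y) →
        ∀ σ : Measure (EuclideanSpace ℝ (Fin n)), IsLocallyFiniteMeasure σ →
          poissonM α (1 + δ) J (σ.restrict (A.pts \ I.pts))
            ≤ ENNReal.ofReal (C * 2 ^ (-(s : ℝ) * δ * (1 - ε)))
              * poissonM α 1 J (σ.restrict (A.pts \ I.pts)) := by
  refine ⟨2 ^ δ, Real.rpow_pos_of_pos two_pos δ, ?_⟩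
  intro ε hε0 hε1 s J I A hJl hIl hAl hJI hIA hlen hdist σ hσ
  set L : ℝ := J.l with hL
  set K : ℝ := (2 : ℝ) ^ ((s : ℝ) * (1 - ε)) with hK
  have hKpos : 0 < K := Real.rpow_pos_of_pos two_pos _
  have hIlen : I.l = 2 ^ (s : ℝ) * L := by
    rw [hlen, ← mul_assoc, ← Real.rpow_add two_pos]
    simp
  -- key: I.l^(1-ε) * J.l^ε = K * L
  have hkey : I.l ^ (1 - ε) * L ^ ε = K * L := by
    rw [hIlen, Real.mul_rpow (by positivity) hJl.le,
      ← Real.rpow_mul (by norm_num : (0:ℝ) ≤ 2), mul_assoc, ← Real.rpow_add hJl]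
    have h1 : (1 - ε) + ε = 1 := by ring
    rw [h1, Real.rpow_one]
  -- constant
  have hcpos : (0:ℝ) < 2 ^ δ * 2 ^ (-(s : ℝ) * δ * (1 - ε)) := by positivity
  set c : ℝ := 2 ^ δ * 2 ^ (-(s : ℝ) * δ * (1 - ε)) with hc
  -- pointwise bound on A\I
  have hptwise : ∀ y ∈ A.pts \ I.pts,
      ENNReal.ofReal (L ^ (1 + δ) / (L + dist y J.center) ^ ((n : ℝ) + (1 + δ) - α))
        ≤ ENNReal.ofReal (c * (L ^ (1:ℝ) / (L + dist y J.center) ^ ((n : ℝ) + 1 - α))) := by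
    intro y hy
    apply ENNReal.ofReal_le_ofReal
    set d : ℝ := dist y J.center with hd
    have hd0 : 0 ≤ d := dist_nonneg
    have hdlb : 1 / 2 * (K * L) ≤ d := by
      rw [← hkey]
      calc 1 / 2 * (I.l ^ (1 - ε) * L ^ ε) = 1 / 2 * I.l ^ (1 - ε) * L ^ ε := by ring
        _ ≤ dist J.center y := hdist y hy.2
        _ = d := dist_comm _ _
    have hD : 0 < L + d := by positivity
    have hsplit : L ^ (1 + δ) / (L + d) ^ ((n : ℝ) + (1 + δ) - α)
        = (L / (L + d)) ^ δ * (L ^ (1:ℝ) / (L + d) ^ ((n : ℝ) + 1 - α)) := by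
      rw [Real.div_rpow hJl.le hD.le]
      have e1 : L ^ (1 + δ) = L ^ δ * L ^ (1:ℝ) := by
        rw [← Real.rpow_add hJl]; ring_nf
      have e2 : (L + d) ^ ((n : ℝ) + (1 + δ) - α) = (L + d) ^ δ * (L + d) ^ ((n:ℝ) + 1 - α) := by
        rw [← Real.rpow_add hD]; ring_nf
      rw [e1, e2]
      field_simp
    rw [hsplit]
    have hbase : L / (L + d) ≤ 2 * K⁻¹ := by
      have h1 : L / (L + d) ≤ L / (1 / 2 * (K * L)) := by
        apply div_le_div_of_nonneg_left hJl.le (by positivity)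
        calc 1 / 2 * (K * L) ≤ d := hdlb
          _ ≤ L + d := by linarith
      have h2 : L / (1 / 2 * (K * L)) = 2 * K⁻¹ := by
        field_simp
      linarith [h1, h2 ▸ h1]
    have hpow : (L / (L + d)) ^ δ ≤ c := by
      calc (L / (L + d)) ^ δ ≤ (2 * K⁻¹) ^ δ :=
            Real.rpow_le_rpow (by positivity) hbase hδ0.le
        _ = c := by
            rw [Real.mul_rpow (by norm_num) (by positivity), hc, hK,
              ← Real.rpow_neg_one (2 ^ ((s:ℝ) * (1 - ε))),
              ← Real.rpow_mul (by norm_num : (0:ℝ) ≤ 2),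
              ← Real.rpow_mul (by norm_num : (0:ℝ) ≤ 2)]
            congr 1
            ring
    exact mul_le_mul_of_nonneg_right hpow (by positivity)
  -- integrate
  have hms : MeasurableSet (A.pts \ I.pts) :=
    A.measurableSet_pts.diff I.measurableSet_pts
  calc poissonM α (1 + δ) J (σ.restrict (A.pts \ I.pts))
      ≤ ∫⁻ y, ENNReal.ofReal (c * (L ^ (1:ℝ) / (L + dist y J.center) ^ ((n : ℝ) + 1 - α)))
          ∂(σ.restrict (A.pts \ I.pts)) := by
        apply lintegral_mono_ae
        exact (ae_restrict_iff' hms).2 (Filter.Eventually.of_forall hptwise)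
    _ = ENNReal.ofReal c * poissonM α 1 J (σ.restrict (A.pts \ I.pts)) := by
        simp_rw [ENNReal.ofReal_mul hcpos.le]
        rw [lintegral_const_mul' _ _ ENNReal.ofReal_ne_top]
        rfl
    _ = ENNReal.ofReal (2 ^ δ * 2 ^ (-(s : ℝ) * δ * (1 - ε)))
          * poissonM α 1 J (σ.restrict (A.pts \ I.pts)) := rfl
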